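/- Let E = (ℤ/2)^n with basis e₁, …, e_n, and for 0 ≤ k ≤ n let σ_k be the representation of E given by ⨁_{|v| = k} v, the direct sum of all linear characters of weight k, and let ϑ_k = e₁ + ⋯ + e_k ∈ E (so ϑ₀ = 0). Let σ be a finite-dimensional complex representation of E whose character is invariant under the action of the symmetric group S_n permuting the coordinates of E. Then σ ≅ ⨁_{k=0}^n m_k(σ) σ_k, where each m_k(σ) = (1/2^n) ∑_{i=0}^n χ_{σ_i}(ϑ_k) χ_σ(ϑ_i) is a non-negative integer. -/

import Mathlib

open Finset

/-- Hamming weight of a vector in `𝔽₂ⁿ`. -/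
def wt {n : ℕ} (v : Fin n → ZMod 2) : ℕ := (Finset.univ.filter fun j => v j ≠ 0).card

/-- The character of `σ_i = ⨁_{|v| = i} v`, the direct sum of all linear characters of
`E = (ℤ/2)ⁿ` of Hamming weight `i`. -/
noncomputable def sigmaChar (n i : ℕ) (e : Fin n → ZMod 2) : ℂ :=
  ∑ v ∈ Finset.univ.filter fun v : Fin n → ZMod 2 => wt v = i,
    (-1 : ℂ) ^ (∑ j, v j * e j).val

/-- `ϑ_k = e₁ + ⋯ + e_k ∈ (ℤ/2)ⁿ`. -/
def vartheta (n k : ℕ) : Fin n → ZMod 2 := fun j => if (j : ℕ) < k then 1 else 0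

namespace Stmt7Aux

/-- The sign character of `ZMod 2`. -/
noncomputable def pm (z : ZMod 2) : ℂ := (-1) ^ z.val

lemma zmod2_cases (a : ZMod 2) : a = 0 ∨ a = 1 := by revert a; decide

lemma pm_zero : pm 0 = 1 := by simp [pm]

lemma pm_one : pm 1 = -1 := by
  have : (1 : ZMod 2).val = 1 := rfl
  simp [pm, this]

lemma pm_add (a b : ZMod 2) : pm (a + b) = pm a * pm b := by
  have h11 : (1 + 1 : ZMod 2) = 0 := by decide
  rcases zmod2_cases a with ha | ha <;> rcases zmod2_cases b with hb | hb <;>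
    subst ha <;> subst hb <;>
    simp [h11, pm_zero, pm_one]

lemma pm_sum {ι : Type*} (s : Finset ι) (f : ι → ZMod 2) :
    pm (∑ j ∈ s, f j) = ∏ j ∈ s, pm (f j) := by
  induction s using Finset.cons_induction with
  | empty => simp [pm_zero]
  | cons a s ha ih => rw [Finset.sum_cons, Finset.prod_cons, pm_add, ih]

lemma sum_pm_mul (a : ZMod 2) : ∑ x : ZMod 2, pm (a * x) = if a = 0 then 2 else 0 := by
  have huniv : (Finset.univ : Finset (ZMod 2)) = {0, 1} := by decide
  rw [huniv]
  rcases zmod2_cases a with ha | ha <;> subst ha <;>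
    · rw [Finset.sum_insert (by decide), Finset.sum_singleton]
      norm_num [pm_zero, pm_one]

/-- Orthogonality of characters of `(ZMod 2)ⁿ`. -/
lemma sum_pm (n : ℕ) (u : Fin n → ZMod 2) :
    ∑ e : Fin n → ZMod 2, pm (∑ j, u j * e j) = if u = 0 then (2 : ℂ) ^ n else 0 := by
  have h1 : ∀ e : Fin n → ZMod 2, pm (∑ j, u j * e j) = ∏ j, pm (u j * e j) :=
    fun e => pm_sum _ _
  simp_rw [h1]
  rw [← Fintype.prod_sum (fun j (x : ZMod 2) => pm (u j * x))]
  simp_rw [sum_pm_mul]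
  by_cases hu : u = 0
  · subst hu; simp
  · rw [if_neg hu]
    obtain ⟨j, hj⟩ : ∃ j, u j ≠ 0 := by
      by_contra h
      push_neg at h
      exact hu (funext h)
    exact Finset.prod_eq_zero (Finset.mem_univ j) (by rw [if_neg hj])

lemma mul_pair_comm {n : ℕ} (v e : Fin n → ZMod 2) :
    ∑ j, v j * e j = ∑ j, e j * v j := by
  exact Finset.sum_congr rfl fun j _ => mul_comm _ _

lemma pi_add_eq_zero_iff {n : ℕ} (f e : Fin n → ZMod 2) : f + e = 0 ↔ f = e := by
  have h : ∀ a b : ZMod 2, a + b = 0 ↔ a = b := by decide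
  simp only [funext_iff, Pi.add_apply, Pi.zero_apply]
  exact forall_congr' fun j => h _ _

lemma wt_le {n : ℕ} (v : Fin n → ZMod 2) : wt v ≤ n := by
  have := Finset.card_filter_le (Finset.univ : Finset (Fin n)) (fun j => v j ≠ 0)
  simpa [wt] using this

lemma wt_vartheta (n k : ℕ) (hk : k ≤ n) : wt (vartheta n k) = k := by
  have h1 : (Finset.univ.filter fun j : Fin n => vartheta n k j ≠ 0) =
      (Finset.range k).attachFin (fun m hm => lt_of_lt_of_le (Finset.mem_range.mp hm) hk) := by
    ext j
    simp only [Finset.mem_filter, Finset.mem_univ, true_and, Finset.mem_attachFin,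
      Finset.mem_range]
    simp only [vartheta]
    constructor
    · intro h
      by_contra hlt
      exact h (by rw [if_neg hlt])
    · intro h
      rw [if_pos h]
      exact one_ne_zero
  rw [wt, h1, Finset.card_attachFin, Finset.card_range]

/-- Every weight-`k` vector is a permutation of `ϑ_k`. -/
lemma exists_perm {n : ℕ} (v : Fin n → ZMod 2) :
    ∃ w : Equiv.Perm (Fin n), v ∘ w = vartheta n (wt v) := by
  classical
  set k := wt v with hk
  have hcard : Fintype.card {j : Fin n // vartheta n k j ≠ 0} =
      Fintype.card {j : Fin n // v j ≠ 0} := by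
    rw [Fintype.card_subtype, Fintype.card_subtype]
    have h1 : (Finset.univ.filter fun j : Fin n => vartheta n k j ≠ 0).card = k :=
      wt_vartheta n k (wt_le v)
    have h2 : (Finset.univ.filter fun j : Fin n => v j ≠ 0).card = k := rfl
    rw [h1, h2]
  have hcard' : Fintype.card {j : Fin n // ¬ vartheta n k j ≠ 0} =
      Fintype.card {j : Fin n // ¬ v j ≠ 0} := by
    have e1 := Fintype.card_subtype_compl (fun j : Fin n => vartheta n k j ≠ 0)
    have e2 := Fintype.card_subtype_compl (fun j : Fin n => v j ≠ 0)
    rw [e1, e2, hcard]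
  let e1 := Fintype.equivOfCardEq hcard
  let e2 := Fintype.equivOfCardEq hcard'
  refine ⟨Equiv.subtypeCongr e1 e2, funext fun j => ?_⟩
  have hone : ∀ a : ZMod 2, a ≠ 0 → a = 1 := by decide
  by_cases hj : vartheta n k j ≠ 0
  · have : Equiv.subtypeCongr e1 e2 j = (e1 ⟨j, hj⟩ : Fin n) := by
      simp [Equiv.subtypeCongr, hj]
    simp only [Function.comp_apply, this]
    rw [hone _ (e1 ⟨j, hj⟩).property, hone _ hj]
  · have : Equiv.subtypeCongr e1 e2 j = (e2 ⟨j, hj⟩ : Fin n) := by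
      simp [Equiv.subtypeCongr, hj]
    simp only [Function.comp_apply, this]
    have h2 := (e2 ⟨j, hj⟩).property
    push_neg at h2
    push_neg at hj
    rw [h2, hj]

end Stmt7Aux

open Stmt7Aux in
/-- Any `S_n`-invariant complex representation `σ` of `E = (ℤ/2)ⁿ` is isomorphic to
`⨁_{k=0}^n m_k(σ) σ_k`, where the multiplicities
`m_k(σ) = (1/2ⁿ) ∑_{i=0}^n χ_{σ_i}(ϑ_k) χ_σ(ϑ_i)` are non-negative integers. -/
theorem stmt_7 (n : ℕ) (σ : FDRep ℂ (Multiplicative (Fin n → ZMod 2)))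
    (hinv : ∀ (w : Equiv.Perm (Fin n)) (e : Fin n → ZMod 2),
      σ.character (Multiplicative.ofAdd (e ∘ w)) = σ.character (Multiplicative.ofAdd e)) :
    ∃ m : ℕ → ℕ,
      (∀ k ≤ n, (m k : ℂ) = ((2 : ℂ) ^ n)⁻¹ *
        ∑ i ∈ Finset.range (n + 1),
          sigmaChar n i (vartheta n k) * σ.character (Multiplicative.ofAdd (vartheta n i))) ∧
      (∀ e : Fin n → ZMod 2,
        σ.character (Multiplicative.ofAdd e) =
          ∑ k ∈ Finset.range (n + 1), (m k : ℂ) * sigmaChar n k e) := by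
  classical
  set χ : (Fin n → ZMod 2) → ℂ := fun e => σ.character (Multiplicative.ofAdd e) with hχ
  set c : (Fin n → ZMod 2) → ℂ := fun v => ∑ f : Fin n → ZMod 2, pm (∑ j, v j * f j) * χ f
    with hc
  have h2n : (2 : ℂ) ^ n ≠ 0 := pow_ne_zero n two_ne_zero
  -- reindexing sums over E by a permutation of coordinates
  have hpair_perm : ∀ (v e : Fin n → ZMod 2) (w : Equiv.Perm (Fin n)),
      ∑ j, (v ∘ w) j * e j = ∑ j, v j * (e ∘ ⇑w.symm) j := by
    intro v e w
    exact Fintype.sum_equiv w _ _ (fun j => by simp)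
  -- χ is invariant under permutations of coordinates and so is c
  have hc_perm : ∀ (v : Fin n → ZMod 2) (w : Equiv.Perm (Fin n)), c (v ∘ w) = c v := by
    intro v w
    simp only [hc]
    have step : ∀ f : Fin n → ZMod 2,
        pm (∑ j, (v ∘ w) j * f j) * χ f
          = pm (∑ j, v j * (f ∘ ⇑w.symm) j) * χ (f ∘ ⇑w.symm) := by
      intro f
      rw [hpair_perm v f w, hχ]
      simp only
      rw [hinv w.symm f]
    simp_rw [step]
    have hbij : Function.Bijective (fun f : Fin n → ZMod 2 => f ∘ ⇑w.symm) := by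
      constructor
      · intro a b hab
        funext x
        have := congrFun hab (w x)
        simpa using this
      · intro g
        exact ⟨g ∘ ⇑w, by funext x; simp⟩
    exact Fintype.sum_bijective _ hbij _ _ (fun f => rfl)
  -- every vector is equivalent to its sorted version
  have hχ_wt : ∀ v : Fin n → ZMod 2, χ (vartheta n (wt v)) = χ v := by
    intro v
    obtain ⟨w, hw⟩ := exists_perm v
    rw [← hw, hχ]
    exact hinv w v
  have hc_wt : ∀ v : Fin n → ZMod 2, c (vartheta n (wt v)) = c v := by
    intro v
    obtain ⟨w, hw⟩ := exists_perm v
    rw [← hw]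
    exact hc_perm v w
  -- the multiplicities are natural numbers: c v is the trace of 2^n times a projection
  have hnat : ∀ v : Fin n → ZMod 2, ∃ N : ℕ, c v = (2 : ℂ) ^ n * N := by
    intro v
    set T : Module.End ℂ σ.V :=
      ∑ f : Fin n → ZMod 2, pm (∑ j, v j * f j) • σ.ρ (Multiplicative.ofAdd f) with hT
    have hTT : T * T = (2 : ℂ) ^ n • T := by
      rw [hT, Finset.sum_mul_sum]
      have step : ∀ f g : Fin n → ZMod 2,
          (pm (∑ j, v j * f j) • σ.ρ (Multiplicative.ofAdd f)) *
            (pm (∑ j, v j * g j) • σ.ρ (Multiplicative.ofAdd g))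
          = pm (∑ j, v j * (f + g) j) • σ.ρ (Multiplicative.ofAdd (f + g)) := by
        intro f g
        rw [smul_mul_smul_comm, ← pm_add, ← map_mul, ← ofAdd_add]
        congr 2
        rw [← Finset.sum_add_distrib]
        exact Finset.sum_congr rfl fun j _ => by rw [Pi.add_apply, mul_add]
      simp_rw [step]
      have reidx : ∀ f : Fin n → ZMod 2,
          ∑ g : Fin n → ZMod 2, pm (∑ j, v j * (f + g) j) • σ.ρ (Multiplicative.ofAdd (f + g))
            = ∑ g : Fin n → ZMod 2, pm (∑ j, v j * g j) • σ.ρ (Multiplicative.ofAdd g) := by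
        intro f
        exact Fintype.sum_equiv (Equiv.addLeft f) _ _ (fun g => rfl)
      simp_rw [reidx]
      rw [Finset.sum_const, Finset.card_univ, Fintype.card_fun, ZMod.card,
        Fintype.card_fin, ← hT]
      rw [← Nat.cast_smul_eq_nsmul ℂ]
      norm_num
    set P : Module.End ℂ σ.V := ((2 : ℂ) ^ n)⁻¹ • T with hP
    have hPP : P ∘ₗ P = P := by
      have : P * P = P := by
        rw [hP, smul_mul_smul_comm, hTT, smul_smul]
        congr 1
        field_simp
      exact this
    obtain ⟨p, hp⟩ := (LinearMap.isProj_iff_isIdempotentElem P).mpr hPP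
    refine ⟨Module.finrank ℂ p, ?_⟩
    have htr : LinearMap.trace ℂ σ.V P = (Module.finrank ℂ p : ℂ) := hp.trace
    have htrP : LinearMap.trace ℂ σ.V P = ((2 : ℂ) ^ n)⁻¹ * c v := by
      rw [hP, map_smul, hT, map_sum]
      simp only [map_smul, smul_eq_mul]
      try rfl
    rw [htrP] at htr
    field_simp at htr
    rw [htr]
  choose N hN using fun k => hnat (vartheta n k)
  -- sigmaChar in terms of pm
  have hsig : ∀ i (e : Fin n → ZMod 2), sigmaChar n i e
      = ∑ v ∈ Finset.univ.filter fun v : Fin n → ZMod 2 => wt v = i, pm (∑ j, v j * e j) :=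
    fun i e => rfl
  refine ⟨N, ?_, ?_⟩
  · -- the multiplicity formula
    intro k _hk
    have key : ∑ i ∈ Finset.range (n + 1),
        sigmaChar n i (vartheta n k) * χ (vartheta n i) = c (vartheta n k) := by
      simp_rw [hsig, Finset.sum_mul]
      have inner : ∀ i ∈ Finset.range (n + 1),
          (∑ v ∈ Finset.univ.filter fun v : Fin n → ZMod 2 => wt v = i,
            pm (∑ j, v j * vartheta n k j) * χ (vartheta n i))
          = ∑ v ∈ Finset.univ.filter fun v : Fin n → ZMod 2 => wt v = i,
            pm (∑ j, vartheta n k j * v j) * χ v := by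
        intro i _
        refine Finset.sum_congr rfl fun v hv => ?_
        rw [Finset.mem_filter] at hv
        rw [mul_pair_comm, ← hv.2, hχ_wt v]
      rw [Finset.sum_congr rfl inner,
        Finset.sum_fiberwise_of_maps_to (g := fun v : Fin n → ZMod 2 => wt v)
          (fun v _ => Finset.mem_range.mpr (Nat.lt_succ_of_le (wt_le v))) _]
    rw [key, hN k]
    field_simp
  · -- the character decomposition (Fourier inversion)
    intro e
    have inv : ∑ v : Fin n → ZMod 2, c v * pm (∑ j, v j * e j) = (2 : ℂ) ^ n * χ e := by
      simp only [hc, Finset.sum_mul]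
      rw [Finset.sum_comm]
      have inner : ∀ f : Fin n → ZMod 2,
          ∑ v : Fin n → ZMod 2, pm (∑ j, v j * f j) * χ f * pm (∑ j, v j * e j)
            = χ f * if f + e = 0 then (2 : ℂ) ^ n else 0 := by
        intro f
        rw [← sum_pm n (f + e), Finset.mul_sum]
        refine Finset.sum_congr rfl fun v _ => ?_
        rw [mul_pair_comm (f + e) v]
        have : (∑ j, v j * (f + e) j) = (∑ j, v j * f j) + ∑ j, v j * e j := by
          rw [← Finset.sum_add_distrib]
          exact Finset.sum_congr rfl fun j _ => by rw [Pi.add_apply, mul_add]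
        rw [this, pm_add]
        ring
      simp_rw [inner, pi_add_eq_zero_iff, mul_ite, mul_zero]
      rw [Finset.sum_ite_eq' Finset.univ e (fun f => χ f * (2:ℂ)^n)]
      simp [mul_comm]
    have key : ∑ k ∈ Finset.range (n + 1), (N k : ℂ) * sigmaChar n k e
        = ((2 : ℂ) ^ n)⁻¹ * ∑ v : Fin n → ZMod 2, c v * pm (∑ j, v j * e j) := by
      simp_rw [hsig, Finset.mul_sum]
      have inner : ∀ k ∈ Finset.range (n + 1),
          (∑ v ∈ Finset.univ.filter fun v : Fin n → ZMod 2 => wt v = k,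
            (N k : ℂ) * pm (∑ j, v j * e j))
          = ∑ v ∈ Finset.univ.filter fun v : Fin n → ZMod 2 => wt v = k,
            ((2 : ℂ) ^ n)⁻¹ * (c v * pm (∑ j, v j * e j)) := by
        intro k _
        refine Finset.sum_congr rfl fun v hv => ?_
        rw [Finset.mem_filter] at hv
        have : c v = (2 : ℂ) ^ n * N k := by rw [← hc_wt v, hv.2, hN k]
        rw [this]
        field_simp
      rw [Finset.sum_congr rfl inner,
        Finset.sum_fiberwise_of_maps_to (g := fun v : Fin n → ZMod 2 => wt v)
          (fun v _ => Finset.mem_range.mpr (Nat.lt_succ_of_le (wt_le v))) _,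
        ← Finset.mul_sum]
    rw [key, inv]
    field_simp
    rfl
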